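/- R̂ic(U_1) ≥ ((c+3)/4)(r−1) − ((c−1)/4)((r−2)η(U_1)² + 1) − (1/4)‖N‖² (that is, the last term is −(1/4) r² ‖H‖²). Equality holds if and only if T(U_1, U_1) = Σ_{j=2}^r T(U_j, U_j) and T(U_1, U_j) = 0 for all j = 2, …, r. -/

import Mathlib

open scoped RealInnerProductSpace

/-- Chen–Ricci inequality for the fibers (vertical Reeb vector field). -/
theorem stmt_5 {V W : Type*} [NormedAddCommGroup V] [InnerProductSpace ℝ V]
    [NormedAddCommGroup W] [InnerProductSpace ℝ W]
    (c : ℝ) (r : ℕ) (hr : 0 < r)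
    (U : OrthonormalBasis (Fin r) ℝ V)
    (ξ : V) (hξ : ‖ξ‖ = 1) (η : V → ℝ) (hη : ∀ X, η X = ⟪X, ξ⟫)
    (T : V →ₗ[ℝ] V →ₗ[ℝ] W) (hT : ∀ X Y, T X Y = T Y X)
    (N : W) (hN : N = ∑ j, T (U j) (U j))
    (Rhat : V → V → V → V → ℝ)
    (hRhat : ∀ X Y Z W', Rhat X Y Z W' =
      (c + 3) / 4 * (⟪Y, Z⟫ * ⟪X, W'⟫ - ⟪X, Z⟫ * ⟪Y, W'⟫)
        + (c - 1) / 4 * (η X * η Z * ⟪Y, W'⟫ - η Y * η Z * ⟪X, W'⟫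
            + η Y * η W' * ⟪X, Z⟫ - η X * η W' * ⟪Y, Z⟫)
        - ⟪T X W', T Y Z⟫ + ⟪T Y W', T X Z⟫)
    (Ric : V → ℝ) (hRic : ∀ u, Ric u = ∑ j, Rhat (U j) u u (U j)) :
    (Ric (U ⟨0, hr⟩) ≥ (c + 3) / 4 * ((r : ℝ) - 1)
        - (c - 1) / 4 * (((r : ℝ) - 2) * (η (U ⟨0, hr⟩)) ^ 2 + 1)
        - (1 / 4) * ‖N‖ ^ 2) ∧
    ((Ric (U ⟨0, hr⟩) = (c + 3) / 4 * ((r : ℝ) - 1)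
        - (c - 1) / 4 * (((r : ℝ) - 2) * (η (U ⟨0, hr⟩)) ^ 2 + 1)
        - (1 / 4) * ‖N‖ ^ 2) ↔
      (T (U ⟨0, hr⟩) (U ⟨0, hr⟩) =
          ∑ j ∈ Finset.univ.filter (fun j => j ≠ ⟨0, hr⟩), T (U j) (U j) ∧
        ∀ j : Fin r, j ≠ ⟨0, hr⟩ → T (U ⟨0, hr⟩) (U j) = 0)) := by
  classical
  set i0 : Fin r := ⟨0, hr⟩ with hi0
  have hinner : ∀ i j : Fin r, ⟪U i, U j⟫ = if i = j then (1:ℝ) else 0 :=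
    orthonormal_iff_ite.mp U.orthonormal
  -- Parseval
  have hη2 : ∑ j, (η (U j))^2 = 1 := by
    have h1 : ∀ j, (η (U j))^2 = ⟪ξ, U j⟫ * ⟪U j, ξ⟫ := by
      intro j; rw [hη, sq, real_inner_comm ξ (U j)]
    calc ∑ j, (η (U j))^2 = ∑ j, ⟪ξ, U j⟫ * ⟪U j, ξ⟫ :=
          Finset.sum_congr rfl fun j _ => h1 j
      _ = ⟪ξ, ξ⟫ := U.sum_inner_mul_inner ξ ξ
      _ = 1 := by rw [real_inner_self_eq_norm_sq, hξ]; norm_num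
  set T00 : W := T (U i0) (U i0) with hT00
  -- per-term computation
  have hterm : ∀ j : Fin r, Rhat (U j) (U i0) (U i0) (U j) =
      (c+3)/4*(1 - (if j = i0 then (1:ℝ) else 0))
      + (c-1)/4*(2*(η (U i0))^2*(if j = i0 then (1:ℝ) else 0)
          - (η (U i0))^2 - (η (U j))^2)
      - ⟪T (U j) (U j), T00⟫
      + ‖T (U i0) (U j)‖^2 := by
    intro j
    rw [hRhat, hinner, hinner, hinner, hinner, hT (U i0) (U j)]
    by_cases h : j = i0
    · subst h
      simp only [if_pos rfl, ite_true, eq_self_iff_true, real_inner_self_eq_norm_sq]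
      simp only [hT00, real_inner_self_eq_norm_sq]
      ring
    · have h' : i0 ≠ j := fun e => h e.symm
      simp only [if_neg h, if_neg h', if_pos rfl, ite_true, eq_self_iff_true,
        real_inner_self_eq_norm_sq]
      ring
  have key : Ric (U i0) =
      (c + 3) / 4 * ((r : ℝ) - 1)
        - (c - 1) / 4 * (((r : ℝ) - 2) * (η (U i0)) ^ 2 + 1)
        - (1 / 4) * ‖N‖ ^ 2
      + ((1/4)*‖N - (2:ℝ) • T00‖^2
          + ∑ j ∈ Finset.univ.erase i0, ‖T (U i0) (U j)‖^2) := by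
    rw [hRic, Finset.sum_congr rfl (fun j _ => hterm j)]
    have hsδ : ∑ j : Fin r, (if j = i0 then (1:ℝ) else 0) = 1 := by
      rw [Finset.sum_ite_eq' Finset.univ i0 (fun _ => (1:ℝ))]
      simp
    have hsT : ∑ j : Fin r, ⟪T (U j) (U j), T00⟫ = ⟪N, T00⟫ := by
      rw [hN, sum_inner]
    have hsn : ∑ j : Fin r, ‖T (U i0) (U j)‖^2 =
        ‖T00‖^2 + ∑ j ∈ Finset.univ.erase i0, ‖T (U i0) (U j)‖^2 := by
      rw [← Finset.add_sum_erase Finset.univ _ (Finset.mem_univ i0)]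
    have hquarter : -⟪N, T00⟫ + ‖T00‖^2
        = -(1/4)*‖N‖^2 + (1/4)*‖N - (2:ℝ) • T00‖^2 := by
      have h1 : ‖N - (2:ℝ) • T00‖^2 = ‖N‖^2 - 2*⟪N, (2:ℝ) • T00⟫ + ‖(2:ℝ) • T00‖^2 :=
        norm_sub_sq_real N ((2:ℝ) • T00)
      have h2 : ⟪N, (2:ℝ) • T00⟫ = 2 * ⟪N, T00⟫ := real_inner_smul_right N T00 2
      have h3 : ‖(2:ℝ) • T00‖^2 = 4 * ‖T00‖^2 := by
        rw [norm_smul, Real.norm_two, mul_pow]; ring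
      rw [h2, h3] at h1
      rw [h1]; ring
    simp only [Finset.sum_add_distrib, Finset.sum_sub_distrib, ← Finset.mul_sum]
    rw [hsT, hsn]
    simp only [hsδ, hη2, Finset.sum_const, Finset.card_univ, Fintype.card_fin,
      nsmul_eq_mul, mul_one]
    linear_combination hquarter
  -- positivity of the extra terms
  have hS0 : (0:ℝ) ≤ ∑ j ∈ Finset.univ.erase i0, ‖T (U i0) (U j)‖^2 :=
    Finset.sum_nonneg fun j _ => sq_nonneg _
  have hq0 : (0:ℝ) ≤ (1/4)*‖N - (2:ℝ) • T00‖^2 := by positivity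
  have hNsplit : N = T00 + ∑ j ∈ Finset.univ.erase i0, T (U j) (U j) := by
    rw [hN, ← Finset.add_sum_erase Finset.univ _ (Finset.mem_univ i0)]
  have hfilter : (Finset.univ.filter (fun j => j ≠ i0)) = Finset.univ.erase i0 :=
    Finset.filter_ne' Finset.univ i0
  constructor
  · rw [key]; linarith
  · constructor
    · intro h
      rw [key] at h
      have hzero : (1/4)*‖N - (2:ℝ) • T00‖^2
          + ∑ j ∈ Finset.univ.erase i0, ‖T (U i0) (U j)‖^2 = 0 := by linarith
      have hq : ‖N - (2:ℝ) • T00‖^2 = 0 := by linarith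
      have hSz : ∑ j ∈ Finset.univ.erase i0, ‖T (U i0) (U j)‖^2 = 0 := by linarith
      have hNe : N - (2:ℝ) • T00 = 0 := by
        have := (pow_eq_zero_iff (by norm_num : (2:ℕ) ≠ 0)).mp hq
        exact norm_eq_zero.mp this
      constructor
      · rw [hfilter]
        have h3 : T00 + (∑ j ∈ Finset.univ.erase i0, T (U j) (U j))
            - (2:ℝ) • T00 = 0 := by rw [← hNsplit]; exact hNe
        rw [two_smul ℝ T00] at h3
        have h4 : (∑ j ∈ Finset.univ.erase i0, T (U j) (U j)) - T00 = 0 := by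
          rw [← h3]; abel
        exact (sub_eq_zero.mp h4).symm
      · intro j hj
        have hjmem : j ∈ Finset.univ.erase i0 := Finset.mem_erase.mpr ⟨hj, Finset.mem_univ j⟩
        have h5 := (Finset.sum_eq_zero_iff_of_nonneg
          (fun j _ => sq_nonneg ‖T (U i0) (U j)‖)).mp hSz j hjmem
        have := (pow_eq_zero_iff (by norm_num : (2:ℕ) ≠ 0)).mp h5
        exact norm_eq_zero.mp this
    · rintro ⟨h1, h2⟩
      rw [hfilter] at h1
      have hqz : N - (2:ℝ) • T00 = 0 := by
        rw [hNsplit, two_smul ℝ T00, hT00, ← h1]; abel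
      have hSz : ∑ j ∈ Finset.univ.erase i0, ‖T (U i0) (U j)‖^2 = 0 :=
        Finset.sum_eq_zero fun j hj => by
          rw [h2 j (Finset.mem_erase.mp hj).1]; simp
      rw [key, hqz, hSz]
      simp
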